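/- The rique-number of the complete graph K_n is at most ⌈n/3⌉. -/

import Mathlib

variable {V : Type*}

/-- A `k`-page rique layout of `G`. -/
def RiqueLayout (G : SimpleGraph V) (k : ℕ) : Prop :=
  ∃ (f : V → ℕ) (page : V → V → Fin k),
    Function.Injective f ∧ (∀ u v, page u v = page v u) ∧
    ∀ a a' b b' c c', G.Adj a a' → G.Adj b b' → G.Adj c c' →
      page a a' = page b b' → page b b' = page c c' →
      ¬ (f a < f b ∧ f b < f c ∧ f c < f b' ∧ f b' < f a' ∧ f b' < f c')

/-- The rique-number of `G`: the least number of pages of a rique layout of `G`. -/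
noncomputable def riqueNumber (G : SimpleGraph V) : ℕ :=
  sInf {k | RiqueLayout G k}

/-- Two "crossing" edges cannot lie on the same circular stack page of `K_m`. -/
lemma cross_aux (m B C B' C' : ℕ) (h1 : B < C) (h2 : C < B') (h3 : B' < C')
    (h4 : C' < m) (h : (B + B') % m / 2 = (C + C') % m / 2) : False := by
  obtain ⟨s, hs1, hs2⟩ : ∃ s, (B + B') % m = s ∧ (s = B + B' ∨ s + m = B + B') := by
    refine ⟨(B + B') % m, rfl, ?_⟩
    rcases Nat.lt_or_ge (B + B') m with h' | h'
    · exact Or.inl (Nat.mod_eq_of_lt h')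
    · right; rw [Nat.mod_eq_sub_mod h', Nat.mod_eq_of_lt (by omega)]; omega
  obtain ⟨t, ht1, ht2⟩ : ∃ t, (C + C') % m = t ∧ (t = C + C' ∨ t + m = C + C') := by
    refine ⟨(C + C') % m, rfl, ?_⟩
    rcases Nat.lt_or_ge (C + C') m with h' | h'
    · exact Or.inl (Nat.mod_eq_of_lt h')
    · right; rw [Nat.mod_eq_sub_mod h', Nat.mod_eq_of_lt (by omega)]; omega
  rw [hs1, ht1] at h
  clear hs1 ht1
  omega

lemma rique_layout_complete (n : ℕ) :
    RiqueLayout (SimpleGraph.completeGraph (Fin n)) ((n + 2) / 3) := by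
  rcases Nat.eq_zero_or_pos n with rfl | hn
  · exact ⟨Fin.val, fun u => u.elim0, fun u => u.elim0,
      fun u => u.elim0, fun u => u.elim0⟩
  set k := (n + 2) / 3 with hkdef
  have hkpos : 0 < k := by omega
  have h3k : n ≤ 3 * k := by omega
  -- the page of the edge {x, y} (as a natural number)
  set pg : ℕ → ℕ → ℕ := fun x y =>
    if min x y < k then min x y else ((x - k) + (y - k)) % (n - k) / 2 with hpg
  have hsym : ∀ x y, pg x y = pg y x := by
    intro x y
    simp only [hpg, min_comm x y, Nat.add_comm (x - k) (y - k)]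
  refine ⟨Fin.val, fun u v => ⟨pg u.val v.val % k, Nat.mod_lt _ hkpos⟩,
    fun u v h => Fin.ext h, fun u v => by simp [hsym u.val v.val], ?_⟩
  intro a a' b b' c c' _ _ _ hpq hqr hbad
  obtain ⟨h1, h2, h3, h4, h5⟩ := hbad
  have hpq' : pg a.val a'.val % k = pg b.val b'.val % k := congrArg Fin.val hpq
  have hqr' : pg b.val b'.val % k = pg c.val c'.val % k := congrArg Fin.val hqr
  -- b is at least k
  have hbk : k ≤ b.val := by
    by_contra hb
    push_neg at hb
    have hab : a.val < k := lt_trans h1 hb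
    have e1 : pg a.val a'.val = a.val := by
      simp only [hpg]
      rw [min_eq_left (le_of_lt (by omega : a.val < a'.val))]
      simp [hab]
    have e2 : pg b.val b'.val = b.val := by
      simp only [hpg]
      rw [min_eq_left (le_of_lt (by omega : b.val < b'.val))]
      simp [hb]
    rw [e1, e2, Nat.mod_eq_of_lt hab, Nat.mod_eq_of_lt hb] at hpq'
    omega
  -- hence all of b, c, b', c' are clique vertices
  have hck : k ≤ c.val := le_trans hbk (le_of_lt h2)
  have hc'n : c'.val < n := c'.2
  have hm : 0 < n - k := by
    have := b.2; omega
  have hmk : n - k ≤ 2 * k := by omega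
  have e2 : pg b.val b'.val = ((b.val - k) + (b'.val - k)) % (n - k) / 2 := by
    simp only [hpg]
    rw [min_eq_left (le_of_lt (by omega : b.val < b'.val))]
    simp [Nat.not_lt.mpr hbk]
  have e3 : pg c.val c'.val = ((c.val - k) + (c'.val - k)) % (n - k) / 2 := by
    simp only [hpg]
    rw [min_eq_left (le_of_lt (by omega : c.val < c'.val))]
    simp [Nat.not_lt.mpr hck]
  have lt2 : pg b.val b'.val < k := by
    rw [e2]
    have := Nat.mod_lt ((b.val - k) + (b'.val - k)) hm
    omega
  have lt3 : pg c.val c'.val < k := by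
    rw [e3]
    have := Nat.mod_lt ((c.val - k) + (c'.val - k)) hm
    omega
  rw [Nat.mod_eq_of_lt lt2, Nat.mod_eq_of_lt lt3] at hqr'
  rw [e2, e3] at hqr'
  exact cross_aux (n - k) (b.val - k) (c.val - k) (b'.val - k) (c'.val - k)
    (by omega) (by omega) (by omega) (by omega) hqr'

/-- The rique-number of `K_n` is at most `⌈n/3⌉`. -/
theorem riqueNumber_complete_upper_bound (n : ℕ) :
    riqueNumber (SimpleGraph.completeGraph (Fin n)) ≤ (n + 2) / 3 :=
  Nat.sInf_le (rique_layout_complete n)
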